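/- Let p be a prime, α ≥ 1 an integer, and m > 1 an integer with gcd(m, p) = 1 and p < q for every prime q dividing m. Let k be an integer with gcd(m, k) = 1, k ≢ 1 (mod m), and k^{p^α} ≡ 1 (mod m). Let G be the group with presentation ⟨x, y | x^m = y^{p^α} = 1, y x y⁻¹ = x^k⟩ (realizable as the semidirect product (ℤ/mℤ) ⋊ (ℤ/p^αℤ), where the generator of ℤ/p^αℤ acts by multiplication by k). Then G is a CCS group if and only if gcd(m, k − 1) = 1 and k^p ≡ 1 (mod m). -/

import Mathlib

private lemma binom_aux (t : ℤ) (n : ℕ) : ∃ c : ℤ, (1 + t) ^ n = 1 + n * t + t ^ 2 * c := by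
  induction n with
  | zero => exact ⟨0, by push_cast; ring⟩
  | succ n ih =>
    obtain ⟨c, hc⟩ := ih
    exact ⟨c + n + t * c, by rw [pow_succ, hc]; push_cast; ring⟩

private lemma geom_block (M r : ℤ) (t : ℕ) (h : r ^ t ≡ 1 [ZMOD M]) (N : ℕ) :
    (∑ i ∈ Finset.range (N * t), r ^ i) ≡ (N : ℤ) * ∑ i ∈ Finset.range t, r ^ i [ZMOD M] := by
  induction N with
  | zero => simp
  | succ N ih =>
    rw [show (N + 1) * t = N * t + t by ring, Finset.sum_range_add]
    have h2 : ∑ i ∈ Finset.range t, r ^ (N * t + i) = (r ^ t) ^ N * ∑ i ∈ Finset.range t, r ^ i := by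
      rw [Finset.mul_sum]
      refine Finset.sum_congr rfl fun i _ => ?_
      rw [← pow_mul, ← pow_add, mul_comm t N]
    rw [h2]
    have h3 := ih.add ((h.pow N).mul_right (∑ i ∈ Finset.range t, r ^ i))
    refine h3.trans ?_
    rw [show ((N:ℤ) * ∑ i ∈ Finset.range t, r ^ i + 1 ^ N * ∑ i ∈ Finset.range t, r ^ i)
      = ((N:ℤ) + 1) * ∑ i ∈ Finset.range t, r ^ i by ring]
    push_cast
    rfl

private lemma geom_ones (M r : ℤ) (h : r ≡ 1 [ZMOD M]) (n : ℕ) :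
    (∑ i ∈ Finset.range n, r ^ i) ≡ (n : ℤ) [ZMOD M] := by
  rw [Int.modEq_iff_dvd]
  have : (n : ℤ) - ∑ i ∈ Finset.range n, r ^ i = ∑ i ∈ Finset.range n, (1 - r ^ i) := by
    rw [Finset.sum_sub_distrib]
    simp
  rw [this]
  refine Finset.dvd_sum fun i _ => ?_
  have := (h.pow i).dvd
  simpa using this

private lemma lift_exp (q : ℕ) (hq : q.Prime) (T : ℕ) (hqT : ¬ (q:ℤ) ∣ (T:ℤ)) (k : ℤ) (m : ℕ)
    (hkT : (m:ℤ) ∣ k ^ T - 1) (h1 : (q:ℤ) ∣ k - 1) :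
    ∀ e : ℕ, q ^ e ∣ m → (q:ℤ) ^ e ∣ k - 1 := by
  intro e
  induction e with
  | zero => intro _; simpa using one_dvd _
  | succ e ih =>
    intro hdvd
    have he : (q:ℤ) ^ e ∣ k - 1 := ih ((pow_dvd_pow q e.le_succ).trans hdvd)
    rcases Nat.eq_zero_or_pos e with rfl | hepos
    · simpa using h1
    obtain ⟨s, hs⟩ := he
    have hk : k = 1 + (q:ℤ) ^ e * s := by linarith
    obtain ⟨c, hc⟩ := binom_aux ((q:ℤ) ^ e * s) T
    have hqe1 : ((q:ℤ) ^ (e+1)) ∣ k ^ T - 1 := by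
      refine dvd_trans ?_ hkT
      exact_mod_cast Int.natCast_dvd_natCast.mpr hdvd
    rw [hk, hc] at hqe1
    have h2e : ((q:ℤ) ^ (e+1)) ∣ ((q:ℤ) ^ e * s) ^ 2 * c := by
      refine Dvd.dvd.mul_right ?_ c
      have : ((q:ℤ) ^ (e+1)) ∣ ((q:ℤ) ^ e) ^ 2 := by
        rw [← pow_mul]
        exact pow_dvd_pow _ (by omega)
      calc ((q:ℤ) ^ (e+1)) ∣ ((q:ℤ) ^ e) ^ 2 := this
        _ ∣ ((q:ℤ) ^ e * s) ^ 2 := by rw [mul_pow]; exact Dvd.dvd.mul_right dvd_rfl _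
    have h3 : ((q:ℤ) ^ (e+1)) ∣ (T : ℤ) * ((q:ℤ) ^ e * s) := by
      have : (T : ℤ) * ((q:ℤ) ^ e * s) = (1 + ↑T * ((q:ℤ)^e * s) + ((q:ℤ)^e*s)^2 * c - 1) - ((q:ℤ)^e*s)^2 * c := by ring
      rw [this]
      exact dvd_sub hqe1 h2e
    have h4 : (q:ℤ) ∣ (T : ℤ) * s := by
      have heq : (T : ℤ) * ((q:ℤ) ^ e * s) = (q:ℤ) ^ e * ((T:ℤ) * s) := by ring
      rw [heq, pow_succ] at h3
      exact (mul_dvd_mul_iff_left (pow_ne_zero e (Int.natCast_ne_zero.mpr hq.ne_zero))).mp h3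
    have hqs : (q:ℤ) ∣ s := by
      rcases (Nat.prime_iff_prime_int.mp hq).dvd_mul.mp h4 with h | h
      · exact absurd h hqT
      · exact h
    obtain ⟨s', rfl⟩ := hqs
    exact ⟨s', by rw [hs]; ring⟩

private lemma char_of_pow_iff {G : Type*} [Group G] (H : Subgroup G) (n : ℕ)
    (h : ∀ g : G, g ∈ H ↔ g ^ n = 1) : H.Characteristic := by
  rw [Subgroup.characteristic_iff_comap_eq]
  intro φ; ext g
  rw [Subgroup.mem_comap, h, h, ← map_pow]
  exact ⟨fun hg => by simpa using congrArg φ.symm hg, fun hg => by rw [hg, map_one]⟩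

private lemma commute_of_isCyclic {G : Type*} [Group G] {H : Subgroup G} (hH : IsCyclic H)
    {a b : G} (ha : a ∈ H) (hb : b ∈ H) : a * b = b * a := by
  obtain ⟨g, hgen⟩ := hH
  obtain ⟨i, hi⟩ := Subgroup.mem_zpowers_iff.mp (hgen ⟨a, ha⟩)
  obtain ⟨j, hj⟩ := Subgroup.mem_zpowers_iff.mp (hgen ⟨b, hb⟩)
  have hi' : a = (g : G) ^ i := by
    have := congrArg (Subtype.val) hi
    simpa using this.symm
  have hj' : b = (g : G) ^ j := by
    have := congrArg (Subtype.val) hj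
    simpa using this.symm
  rw [hi', hj', ← zpow_add, ← zpow_add, add_comm]

private lemma isCyclic_of_le_zpowers {G : Type*} [Group G] {N : Subgroup G} {z : G}
    (h : N ≤ Subgroup.zpowers z) : IsCyclic N := by
  haveI : IsCyclic (Subgroup.zpowers z) := by
    refine ⟨⟨⟨z, Subgroup.mem_zpowers z⟩, fun w => ?_⟩⟩
    obtain ⟨i, hi⟩ := Subgroup.mem_zpowers_iff.mp w.2
    refine Subgroup.mem_zpowers_iff.mpr ⟨i, ?_⟩
    ext
    simpa using hi
  have e := Subgroup.subgroupOfEquivOfLe h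
  exact isCyclic_of_surjective e e.surjective

/-- A finite group is a `CCS` group if it is not cyclic, it has a nontrivial proper
characteristic subgroup, and every proper characteristic subgroup is cyclic. -/
def IsCCS (G : Type*) [Group G] : Prop :=
  ¬ IsCyclic G ∧
  (∃ N : Subgroup G, N.Characteristic ∧ N ≠ ⊥ ∧ N ≠ ⊤) ∧
  ∀ N : Subgroup G, N.Characteristic → N ≠ ⊤ → IsCyclic N

/-- Let `p` be a prime, `α ≥ 1`, `m > 1` with `gcd(m, p) = 1` and `p` smaller than every
prime divisor of `m`, and let `k` satisfy `gcd(m, k) = 1`, `k ≢ 1 (mod m)`,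
`k^{p^α} ≡ 1 (mod m)`. A group `G` with presentation
`⟨x, y | x^m = y^{p^α} = 1, y x y⁻¹ = x^k⟩` (equivalently, a group of order `m·p^α`
generated by such `x, y`) is a CCS group iff `gcd(m, k - 1) = 1` and `k^p ≡ 1 (mod m)`. -/
theorem CCS_iff_gcd_eq_one_Cpalpha
    (p α m : ℕ) (hp : p.Prime) (hα : 1 ≤ α) (hm : 1 < m)
    (hcop : Nat.Coprime m p) (hlt : ∀ q : ℕ, q.Prime → q ∣ m → p < q)
    (k : ℤ) (hk : Int.gcd k m = 1) (hk1 : ¬ k ≡ 1 [ZMOD (m : ℤ)])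
    (hka : k ^ (p ^ α) ≡ 1 [ZMOD (m : ℤ)])
    (G : Type*) [Group G] [Finite G] (x y : G)
    (hgen : Subgroup.closure ({x, y} : Set G) = ⊤)
    (hx : x ^ m = 1) (hy : y ^ (p ^ α) = 1) (hconj : y * x * y⁻¹ = x ^ k)
    (hcard : Nat.card G = m * p ^ α) :
    IsCCS G ↔ (Int.gcd (k - 1) m = 1 ∧ k ^ p ≡ 1 [ZMOD (m : ℤ)]) := by
  set P := p ^ α with hP
  have hp2 : 2 ≤ p := hp.two_le
  have hPpos : 0 < P := pow_pos hp.pos α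
  have hP1 : 1 < P := Nat.one_lt_pow (by omega) hp.one_lt
  have hm0 : m ≠ 0 := by omega
  set X := Subgroup.zpowers x with hX
  set Y := Subgroup.zpowers y with hYdef
  -- conjugation formulas
  have conj1 : ∀ a : ℤ, y * x ^ a * y⁻¹ = x ^ (a * k) := by
    intro a
    calc y * x ^ a * y⁻¹ = (y * x * y⁻¹) ^ a := by rw [conj_zpow]
      _ = (x ^ k) ^ a := by rw [hconj]
      _ = x ^ (a * k) := by rw [← zpow_mul, mul_comm]
  have conjLem : ∀ (b : ℕ) (a : ℤ), y ^ b * x ^ a * (y ^ b)⁻¹ = x ^ (a * k ^ b) := by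
    intro b
    induction b with
    | zero => intro a; simp
    | succ b ih =>
      intro a
      have h1 : y ^ (b+1) * x ^ a * (y ^ (b+1))⁻¹
          = y ^ b * (y * x ^ a * y⁻¹) * (y ^ b)⁻¹ := by
        rw [pow_succ]; group
      rw [h1, conj1, ih, pow_succ]
      congr 1
      ring
  have conj2 : ∀ (b : ℕ) (a : ℤ), y ^ b * x ^ a = x ^ (a * k ^ b) * y ^ b := by
    intro b a
    rw [← conjLem b a]; group
  have hyy : (y ^ (P-1))⁻¹ = y := by
    rw [inv_eq_iff_mul_eq_one, ← pow_succ]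
    rw [show P - 1 + 1 = P by omega]
    exact hy
  have hyinv : ∀ a : ℤ, y⁻¹ * x ^ a * y ∈ X := by
    intro a
    obtain ⟨w, hw⟩ : ∃ w, w = y ^ (P-1) := ⟨_, rfl⟩
    have hwy : w⁻¹ = y := by rw [hw]; exact hyy
    have h2 : y⁻¹ * x ^ a * y = w * x ^ a * w⁻¹ := by rw [← hwy, inv_inv]
    rw [h2, hw, conjLem]
    exact ⟨_, rfl⟩
  -- normality of X
  have hnorm_aux : ∀ g : G, (∀ a : ℤ, ∃ b : ℤ, g * x ^ a * g⁻¹ = x ^ b) →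
      (∀ a : ℤ, g⁻¹ * x ^ a * g ∈ X) → g ∈ Subgroup.normalizer (X : Set G) := by
    intro g hfwd hbwd
    rw [Subgroup.mem_normalizer_iff]
    intro h
    constructor
    · rintro ⟨a, rfl⟩
      obtain ⟨b, hb⟩ := hfwd a
      exact ⟨b, hb.symm⟩
    · rintro ⟨a, ha⟩
      have h2 : h = g⁻¹ * (g * h * g⁻¹) * g := by group
      rw [h2, ← ha]
      exact hbwd a
  have hXnormal : X.Normal := by
    rw [← Subgroup.normalizer_eq_top_iff, eq_top_iff, ← hgen, Subgroup.closure_le]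
    intro g hg
    have hg' : g = x ∨ g = y := hg
    rcases hg' with h | h <;> rw [SetLike.mem_coe, h]
    · refine hnorm_aux x (fun a => ⟨a, by group⟩) (fun a => ?_)
      have h3 : x⁻¹ * x ^ a * x = x ^ a := by group
      rw [h3]; exact ⟨a, rfl⟩
    · refine hnorm_aux y (fun a => ⟨a * k, conj1 a⟩) (fun a => hyinv a)
  haveI := hXnormal
  have hsup : X ⊔ Y = ⊤ := by
    rw [eq_top_iff, ← hgen, Subgroup.closure_le]
    intro g hg
    have hg' : g = x ∨ g = y := hg
    rcases hg' with h | h <;> rw [SetLike.mem_coe, h]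
    · exact (le_sup_left : X ≤ X ⊔ Y) (Subgroup.mem_zpowers x)
    · exact (le_sup_right : Y ≤ X ⊔ Y) (Subgroup.mem_zpowers y)
  set π := QuotientGroup.mk' X with hπ
  have hπx : π x = 1 := (QuotientGroup.eq_one_iff x).mpr (Subgroup.mem_zpowers x)
  have hQtop : Subgroup.zpowers (π y) = ⊤ := by
    rw [eq_top_iff, ← Subgroup.map_top_of_surjective π (QuotientGroup.mk'_surjective X),
      ← hgen, MonoidHom.map_closure, Subgroup.closure_le]
    rintro g ⟨a, ha, rfl⟩
    have ha' : a = x ∨ a = y := ha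
    rcases ha' with h | h <;> rw [SetLike.mem_coe, h]
    · rw [hπx]; exact one_mem _
    · exact Subgroup.mem_zpowers _
  have hidx : X.index = orderOf (π y) := by
    rw [Subgroup.index, ← Nat.card_zpowers (π y), hQtop, Subgroup.card_top]
  have hdvd1 : orderOf x ∣ m := orderOf_dvd_of_pow_eq_one hx
  have hdvd2 : orderOf (π y) ∣ P := orderOf_dvd_of_pow_eq_one (by rw [← map_pow, hy, map_one])
  have hprod : orderOf x * orderOf (π y) = m * P := by
    rw [← Nat.card_zpowers x, ← hidx, ← hX, Subgroup.card_mul_index, hcard]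
  obtain ⟨c, hc⟩ := hdvd1
  obtain ⟨d, hd⟩ := hdvd2
  have ha0 : orderOf x ≠ 0 := fun h => hm0 (by rw [hc, h, zero_mul])
  have hb0 : orderOf (π y) ≠ 0 := fun h => hPpos.ne' (by rw [hd, h, zero_mul])
  have hcd : c * d = 1 := by
    have h2 : (orderOf x * orderOf (π y)) * (c * d) = (orderOf x * orderOf (π y)) * 1 := by
      rw [mul_one]
      conv_rhs => rw [hprod]
      rw [hc, hd]; ring
    exact Nat.eq_of_mul_eq_mul_left (Nat.pos_of_ne_zero (Nat.mul_ne_zero ha0 hb0)) h2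
  have hc1 : c = 1 := Nat.dvd_one.mp ⟨d, hcd.symm⟩
  have hd1 : d = 1 := Nat.dvd_one.mp ⟨c, by rw [mul_comm]; exact hcd.symm⟩
  have ordx : orderOf x = m := by rw [hc, hc1, mul_one]
  have ordπy : orderOf (π y) = P := by rw [hd, hd1, mul_one]
  have ordy : orderOf y = P := Nat.dvd_antisymm
    (orderOf_dvd_of_pow_eq_one hy) (ordπy ▸ orderOf_map_dvd π y)
  have hxiff : ∀ a : ℤ, x ^ a = 1 ↔ (m:ℤ) ∣ a := by
    intro a
    rw [← orderOf_dvd_iff_zpow_eq_one, ordx]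
  have hyiffZ : ∀ b : ℤ, y ^ b = 1 ↔ (P:ℤ) ∣ b := by
    intro b
    rw [← orderOf_dvd_iff_zpow_eq_one, ordy]
  have hyiff : ∀ b : ℕ, y ^ b = 1 ↔ P ∣ b := by
    intro b
    rw [← zpow_natCast, hyiffZ, Int.natCast_dvd_natCast]
  have sepZ : ∀ (a b : ℤ), x ^ a * y ^ b = 1 → (m:ℤ) ∣ a ∧ (P:ℤ) ∣ b := by
    intro a b hab
    have hxa : x ^ a ∈ X ⊓ Y := by
      constructor
      · exact ⟨a, rfl⟩
      · have : x ^ a = (y ^ b)⁻¹ := by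
          rw [eq_inv_iff_mul_eq_one]; exact hab
        rw [this, ← zpow_neg]
        exact ⟨-b, rfl⟩
    have hbot : X ⊓ Y ≤ ⊥ := by
      intro g hg
      rcases hg with ⟨hgX, hgY⟩
      obtain ⟨c, rfl⟩ := Subgroup.mem_zpowers_iff.mp hgY
      have h1 : π (y ^ c) = 1 := (QuotientGroup.eq_one_iff _).mpr hgX
      rw [map_zpow] at h1
      have h2 : (P:ℤ) ∣ c := by
        rw [← ordπy]; exact orderOf_dvd_iff_zpow_eq_one.mpr h1
      rw [Subgroup.mem_bot, hyiffZ]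
      exact h2
    have h1 : x ^ a = 1 := Subgroup.mem_bot.mp (hbot hxa)
    have h2 : y ^ b = 1 := by
      rw [h1, one_mul] at hab; exact hab
    exact ⟨(hxiff a).mp h1, (hyiffZ b).mp h2⟩
  have decomp : ∀ g : G, ∃ (a : ℤ) (b : ℕ), g = x ^ a * y ^ b := by
    intro g
    have hg : g ∈ (↑(X ⊔ Y) : Set G) := by rw [hsup]; trivial
    rw [Subgroup.normal_mul X Y] at hg
    obtain ⟨u, hu, v, hv, rfl⟩ := hg
    obtain ⟨a, rfl⟩ := Subgroup.mem_zpowers_iff.mp (SetLike.mem_coe.mp hu)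
    obtain ⟨c, rfl⟩ := Subgroup.mem_zpowers_iff.mp (SetLike.mem_coe.mp hv)
    refine ⟨a, (c % (P:ℤ)).toNat, ?_⟩
    congr 1
    have hc0 : (0:ℤ) ≤ c % P := Int.emod_nonneg c (by positivity)
    rw [← zpow_natCast y, Int.toNat_of_nonneg hc0]
    conv_lhs => rw [show c = (P:ℤ) * (c / P) + c % P from (Int.mul_ediv_add_emod c P).symm]
    rw [zpow_add, zpow_mul, zpow_natCast y P, hy, one_zpow, one_mul]
  
  have powF : ∀ (a : ℤ) (b n : ℕ), (x ^ a * y ^ b) ^ n =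
      x ^ (a * ∑ i ∈ Finset.range n, (k ^ b) ^ i) * y ^ (b * n) := by
    intro a b n
    induction n with
    | zero => simp
    | succ n ih =>
      rw [pow_succ, ih]
      have h1 : x ^ (a * ∑ i ∈ Finset.range n, (k ^ b) ^ i) * y ^ (b * n) * (x ^ a * y ^ b)
          = x ^ (a * ∑ i ∈ Finset.range n, (k ^ b) ^ i) * (y ^ (b * n) * x ^ a) * y ^ b := by
        group
      rw [h1, conj2 (b*n) a]
      have h2 : x ^ (a * ∑ i ∈ Finset.range n, (k ^ b) ^ i) * (x ^ (a * k ^ (b*n)) * y ^ (b*n)) * y ^ b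
          = (x ^ (a * ∑ i ∈ Finset.range n, (k ^ b) ^ i) * x ^ (a * k ^ (b*n))) * y ^ (b*n + b) := by
        rw [pow_add]; group
      rw [h2, ← zpow_add]
      have e1 : a * ∑ i ∈ Finset.range n, (k ^ b) ^ i + a * k ^ (b*n)
          = a * ∑ i ∈ Finset.range (n+1), (k ^ b) ^ i := by
        rw [Finset.sum_range_succ, pow_mul]; ring
      have e2 : b * n + b = b * (n + 1) := by ring
      rw [e1, e2]
  have genNormal : ∀ w : ℤ, (Subgroup.zpowers (x ^ w)).Normal := by
    intro w
    constructor
    intro n hn g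
    obtain ⟨c, hc⟩ := Subgroup.mem_zpowers_iff.mp hn
    obtain ⟨a, b, rfl⟩ := decomp g
    rw [← hc, ← zpow_mul]
    have h1 : x ^ a * y ^ b * x ^ (w * c) * (x ^ a * y ^ b)⁻¹
        = x ^ a * (y ^ b * x ^ (w * c) * (y ^ b)⁻¹) * (x ^ a)⁻¹ := by group
    rw [h1, conjLem]
    have h2 : x ^ a * x ^ (w * c * k ^ b) * (x ^ a)⁻¹ = x ^ (w * c * k ^ b) := by group
    rw [h2]
    exact Subgroup.mem_zpowers_iff.mpr ⟨c * k ^ b, by rw [← zpow_mul, mul_assoc]⟩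
  have hXiff : ∀ g : G, g ∈ X ↔ g ^ m = 1 := by
    intro g
    constructor
    · rintro ⟨a, rfl⟩
      rw [← zpow_natCast (x ^ a), ← zpow_mul, mul_comm, zpow_mul, zpow_natCast x m, hx, one_zpow]
    · intro hg
      obtain ⟨a, b, rfl⟩ := decomp g
      rw [powF, ← zpow_natCast y] at hg
      obtain ⟨h1, h2⟩ := sepZ _ _ hg
      have h3 : P ∣ b * m := Int.natCast_dvd_natCast.mp h2
      have h4 : P ∣ b := (Nat.Coprime.pow_left α hcop.symm).dvd_of_dvd_mul_right h3
      have h5 : y ^ b = 1 := (hyiff b).mpr h4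
      rw [h5, mul_one]
      exact ⟨a, rfl⟩
  have hXchar : X.Characteristic := char_of_pow_iff X m hXiff
  have hpnm : ¬ p ∣ m := fun h => hp.one_lt.ne' (hcop.symm.eq_one_of_dvd h)
  
  set α' := α - 1 with hα'
  have hpα : P = p ^ α' * p := by
    rw [hP, hα', ← pow_succ]
    congr 1
    omega
  have hp0 : p ^ α' ≠ 0 := pow_ne_zero _ hp.ne_zero
  -- the subgroup A = <x, y^p>
  set A := X ⊔ Subgroup.zpowers (y ^ p) with hA
  have hAiff : ∀ g : G, g ∈ A ↔ g ^ (m * p ^ α') = 1 := by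
    intro g
    constructor
    · intro hg
      have hg' : g ∈ (↑(X ⊔ Subgroup.zpowers (y ^ p)) : Set G) := hg
      rw [Subgroup.normal_mul] at hg'
      obtain ⟨u, hu, v, hv, rfl⟩ := hg'
      obtain ⟨a, rfl⟩ := Subgroup.mem_zpowers_iff.mp (SetLike.mem_coe.mp hu)
      obtain ⟨c, rfl⟩ := Subgroup.mem_zpowers_iff.mp (SetLike.mem_coe.mp hv)
      -- rewrite (y^p)^c as y^b with b : ℕ, p ∣ b
      obtain ⟨b, hbc, hpb⟩ : ∃ b : ℕ, (y ^ p) ^ c = y ^ b ∧ p ∣ b := by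
        have hb0 : (0:ℤ) ≤ ((p:ℤ) * c) % (P:ℤ) := Int.emod_nonneg _ (by positivity)
        refine ⟨((((p:ℤ) * c) % (P:ℤ))).toNat, ?_, ?_⟩
        · rw [← zpow_natCast y p, ← zpow_mul, ← zpow_natCast y, Int.toNat_of_nonneg hb0]
          conv_lhs => rw [show (p:ℤ) * c = (P:ℤ) * (((p:ℤ)*c) / P) + ((p:ℤ)*c) % P from
            (Int.mul_ediv_add_emod _ _).symm]
          rw [zpow_add, zpow_mul, zpow_natCast y P, hy, one_zpow, one_mul]
        · have h1 : (p:ℤ) ∣ ((p:ℤ) * c) % (P:ℤ) := by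
            rw [Int.emod_def]
            refine dvd_sub ⟨c, rfl⟩ (Dvd.dvd.mul_right ?_ _)
            rw [hpα]
            push_cast
            exact dvd_mul_left _ _
          have h2 : (p:ℤ) ∣ ((((p:ℤ) * c) % (P:ℤ)).toNat : ℤ) := by
            rw [Int.toNat_of_nonneg hb0]; exact h1
          exact_mod_cast h2
      rw [hbc, powF]
      have hy1 : y ^ (b * (m * p ^ α')) = 1 := by
        rw [hyiff]
        obtain ⟨b'', rfl⟩ := hpb
        rw [hpα]
        exact ⟨b'' * m, by ring⟩
      have hx1 : x ^ (a * ∑ i ∈ Finset.range (m * p ^ α'), (k ^ b) ^ i) = 1 := by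
        rw [hxiff]
        refine Dvd.dvd.mul_left ?_ a
        have hr : (k ^ b) ^ (p ^ α') ≡ 1 [ZMOD (m:ℤ)] := by
          obtain ⟨b'', rfl⟩ := hpb
          rw [← pow_mul, show p * b'' * p ^ α' = b'' * (p ^ α' * p) by ring, ← hpα, pow_mul']
          exact (hka.pow b'').trans (by rw [one_pow])
        have hblock := geom_block (m:ℤ) (k ^ b) (p ^ α') hr m
        have h0 : ((m:ℤ) * ∑ i ∈ Finset.range (p ^ α'), (k ^ b) ^ i) ≡ 0 [ZMOD (m:ℤ)] :=
          (Int.modEq_zero_iff_dvd).mpr ⟨_, rfl⟩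
        exact (Int.modEq_zero_iff_dvd).mp (hblock.trans h0)
      rw [hx1, hy1, one_mul]
    · intro hg
      obtain ⟨a, b, rfl⟩ := decomp g
      rw [powF, ← zpow_natCast y] at hg
      obtain ⟨h1, h2⟩ := sepZ _ _ hg
      have h3 : P ∣ b * (m * p ^ α') := Int.natCast_dvd_natCast.mp h2
      have hpb : p ∣ b := by
        have h4 : p ^ α' * p ∣ (b * m) * p ^ α' := by
          rw [show (b * m) * p ^ α' = b * (m * p ^ α') by ring, ← hpα]
          exact h3
        have h5 : p * p ^ α' ∣ (b * m) * p ^ α' := by rwa [mul_comm (p ^ α') p] at h4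
        exact hcop.symm.dvd_of_dvd_mul_right ((mul_dvd_mul_iff_right hp0).mp h5)
      obtain ⟨b₀, rfl⟩ := hpb
      refine Subgroup.mul_mem _ ((le_sup_left : X ≤ A) ⟨a, rfl⟩)
        ((le_sup_right : Subgroup.zpowers (y ^ p) ≤ A) ?_)
      rw [pow_mul]
      exact Subgroup.pow_mem _ (Subgroup.mem_zpowers _) b₀
  have hAchar : A.Characteristic := char_of_pow_iff A _ hAiff
  have hAne : A ≠ ⊤ := by
    intro htop
    have hyA : y ∈ A := by rw [htop]; trivial
    rw [hAiff, hyiff] at hyA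
    have hpm : p ∣ m := by
      have h4 : p ^ α' * p ∣ m * p ^ α' := hpα ▸ hyA
      have h5 : p * p ^ α' ∣ m * p ^ α' := by rwa [mul_comm (p ^ α') p] at h4
      exact (mul_dvd_mul_iff_right hp0).mp h5
    exact hpnm hpm
  
  have hkT : (m:ℤ) ∣ k ^ P - 1 := dvd_sub_comm.mp hka.dvd
  constructor
  · -- forward direction
    rintro ⟨hnc, hex, hcyc⟩
    have hkp : k ^ p ≡ 1 [ZMOD (m:ℤ)] := by
      have hAcyc := hcyc A hAchar hAne
      have hxA : x ∈ A := (le_sup_left : X ≤ A) (Subgroup.mem_zpowers x)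
      have hyA : y ^ p ∈ A := (le_sup_right : Subgroup.zpowers (y ^ p) ≤ A)
        (Subgroup.mem_zpowers _)
      have hcomm := commute_of_isCyclic hAcyc hyA hxA
      have h3 := conjLem p 1
      have h4 : y ^ p * x ^ (1:ℤ) * (y ^ p)⁻¹ = x := by
        rw [zpow_one, hcomm]; group
      rw [h4, one_mul] at h3
      have h5 : x ^ (k ^ p - 1) = 1 := by
        rw [zpow_sub, zpow_one, ← h3]; group
      rw [hxiff] at h5
      exact Int.modEq_iff_dvd.mpr (dvd_sub_comm.mp h5)
    refine ⟨?_, hkp⟩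
    by_contra hdne
    set d := Int.gcd (k - 1) (m:ℤ) with hdd
    have hd0 : d ≠ 0 := by
      intro h
      rw [hdd] at h
      exact hm0 (by exact_mod_cast (Int.gcd_eq_zero_iff.mp h).2)
    have hddm : d ∣ m := by
      have := Int.gcd_dvd_right (a := k - 1) (b := (m:ℤ))
      exact_mod_cast this
    have hdk : (d:ℤ) ∣ k - 1 := Int.gcd_dvd_left _ _
    set m' := m / d with hm'def
    have hmdm : m = d * m' := (Nat.mul_div_cancel' hddm).symm
    have hm'0 : m' ≠ 0 := by
      intro h
      rw [h, mul_zero] at hmdm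
      exact hm0 hmdm
    have core : ∀ q : ℕ, q.Prime → q ∣ m' → ¬ ((q:ℤ) ∣ k - 1) := by
      intro q hq hqm' hqk
      have hqm : q ∣ m := hmdm ▸ Dvd.dvd.mul_left hqm' d
      have hqplt := hlt q hq hqm
      have hqT : ¬ (q:ℤ) ∣ (P:ℤ) := by
        intro hdvd
        have h1 : (q:ℤ) ∣ ((p:ℤ))^α := by rw [hP] at hdvd; push_cast at hdvd; exact hdvd
        have h2 := (Nat.prime_iff_prime_int.mp hq).dvd_of_dvd_pow h1
        have h3 : q ∣ p := Int.natCast_dvd_natCast.mp h2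
        have := (Nat.prime_dvd_prime_iff_eq hq hp).mp h3
        omega
      have hlift := lift_exp q hq P hqT k m hkT hqk (m.factorization q) (Nat.ordProj_dvd m q)
      have hqe_d : q ^ (m.factorization q) ∣ d := by
        have h2 : ((q ^ (m.factorization q) : ℕ) : ℤ) ∣ (m:ℤ) :=
          Int.natCast_dvd_natCast.mpr (Nat.ordProj_dvd m q)
        have h3 := Int.dvd_gcd (by exact_mod_cast hlift) h2
        exact_mod_cast h3
      have h4 : q ^ (m.factorization q + 1) ∣ m := by
        rw [pow_succ]
        calc q ^ (m.factorization q) * q ∣ d * m' := mul_dvd_mul hqe_d hqm'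
          _ = m := hmdm.symm
      exact Nat.pow_succ_factorization_not_dvd hm0 hq h4
    have copdm' : Nat.Coprime d m' := by
      by_contra hncop
      obtain ⟨q, hq, hqd⟩ := Nat.exists_prime_and_dvd (fun h => hncop h)
      exact core q hq (hqd.trans (Nat.gcd_dvd_right d m'))
        ((Int.natCast_dvd_natCast.mpr (hqd.trans (Nat.gcd_dvd_left d m'))).trans hdk)
    have copdP : Nat.Coprime d P := by
      rw [hP]
      exact Nat.Coprime.pow_right α (Nat.Coprime.coprime_dvd_left hddm hcop)
    have hmd : ¬ ((m:ℤ) ∣ (d:ℤ) * (k - 1)) := by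
      intro hdvd
      have hm'k : (m':ℤ) ∣ k - 1 := by
        have h1 : ((d:ℤ) * (m':ℤ)) ∣ (d:ℤ) * (k-1) := by
          have : ((m:ℕ) : ℤ) = (d:ℤ) * (m':ℤ) := by exact_mod_cast congrArg (Nat.cast : ℕ → ℤ) hmdm
          rw [← this]
          exact hdvd
        exact (mul_dvd_mul_iff_left (show (d:ℤ) ≠ 0 from Int.natCast_ne_zero.mpr hd0)).mp h1
      by_cases hm'1 : m' = 1
      · apply hk1
        have hmd' : (m:ℤ) ∣ k - 1 := by
          have : m = d := by rw [hmdm, hm'1, mul_one]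
          rw [this]
          exact hdk
        exact Int.modEq_iff_dvd.mpr (dvd_sub_comm.mp hmd')
      · obtain ⟨q, hq, hqm'⟩ := Nat.exists_prime_and_dvd hm'1
        exact core q hq hqm' ((Int.natCast_dvd_natCast.mpr hqm').trans hm'k)
    -- the subgroup M = <x^d, y>
    haveI := genNormal (d:ℤ)
    set M := Subgroup.zpowers (x ^ (d:ℤ)) ⊔ Y with hM
    have hMiff : ∀ g : G, g ∈ M ↔ g ^ (m' * P) = 1 := by
      intro g
      constructor
      · intro hg
        have hg' : g ∈ (↑(Subgroup.zpowers (x ^ (d:ℤ)) ⊔ Y) : Set G) := hg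
        rw [Subgroup.normal_mul] at hg'
        obtain ⟨u, hu, v, hv, rfl⟩ := hg'
        obtain ⟨a, rfl⟩ := Subgroup.mem_zpowers_iff.mp (SetLike.mem_coe.mp hu)
        obtain ⟨c, rfl⟩ := Subgroup.mem_zpowers_iff.mp (SetLike.mem_coe.mp hv)
        obtain ⟨b, hbc⟩ : ∃ b : ℕ, y ^ c = y ^ b := by
          have hb0 : (0:ℤ) ≤ c % (P:ℤ) := Int.emod_nonneg _ (by positivity)
          refine ⟨(c % (P:ℤ)).toNat, ?_⟩
          rw [← zpow_natCast y, Int.toNat_of_nonneg hb0]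
          conv_lhs => rw [show c = (P:ℤ) * (c / P) + c % P from (Int.mul_ediv_add_emod _ _).symm]
          rw [zpow_add, zpow_mul, zpow_natCast y P, hy, one_zpow, one_mul]
        rw [hbc, ← zpow_mul, powF]
        have hy1 : y ^ (b * (m' * P)) = 1 := by
          rw [hyiff]
          exact ⟨b * m', by ring⟩
        have hx1 : x ^ ((d:ℤ) * a * ∑ i ∈ Finset.range (m' * P), (k ^ b) ^ i) = 1 := by
          rw [hxiff]
          have hr : (k ^ b) ^ P ≡ 1 [ZMOD (m:ℤ)] := by
            rw [← pow_mul, mul_comm b P, pow_mul]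
            exact (hka.pow b).trans (by rw [one_pow])
          have hblock := geom_block (m:ℤ) (k ^ b) P hr m'
          have h6 : ((d:ℤ) * a * ∑ i ∈ Finset.range (m' * P), (k ^ b) ^ i) ≡
              (d:ℤ) * a * ((m':ℤ) * ∑ i ∈ Finset.range P, (k ^ b) ^ i) [ZMOD (m:ℤ)] :=
            hblock.mul_left _
          have h7 : ((d:ℤ) * a * ((m':ℤ) * ∑ i ∈ Finset.range P, (k ^ b) ^ i)) ≡ 0 [ZMOD (m:ℤ)] := by
            rw [Int.modEq_zero_iff_dvd]
            refine ⟨a * ∑ i ∈ Finset.range P, (k ^ b) ^ i, ?_⟩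
            have hcast : ((m:ℕ) : ℤ) = (d:ℤ) * (m':ℤ) := by exact_mod_cast congrArg (Nat.cast : ℕ → ℤ) hmdm
            rw [hcast]
            ring
          exact Int.modEq_zero_iff_dvd.mp (h6.trans h7)
        rw [hx1, hy1, one_mul]
      · intro hg
        obtain ⟨a, b, rfl⟩ := decomp g
        rw [powF, ← zpow_natCast y] at hg
        obtain ⟨h1, h2⟩ := sepZ _ _ hg
        -- d ∣ a
        have hk1d : k ≡ 1 [ZMOD (d:ℤ)] := Int.modEq_iff_dvd.mpr (dvd_sub_comm.mp hdk)
        have hSn := geom_ones (d:ℤ) (k ^ b) ((hk1d.pow b).trans (by rw [one_pow])) (m' * P)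
        have hcopdn : IsCoprime (d:ℤ) ((m' * P : ℕ) : ℤ) := by
          rw [Int.isCoprime_iff_gcd_eq_one, Int.gcd_natCast_natCast]
          exact copdm'.mul_right copdP
        obtain ⟨t, ht⟩ := hSn.dvd
        have hSt : (∑ i ∈ Finset.range (m' * P), (k ^ b) ^ i) = ((m' * P : ℕ) : ℤ) + (d:ℤ) * (-t) := by
          rw [mul_neg, ← ht]
          push_cast
          ring
        have hcopdS : IsCoprime (d:ℤ) (∑ i ∈ Finset.range (m' * P), (k ^ b) ^ i) := by
          rw [hSt]
          exact hcopdn.add_mul_left_right (-t)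
        have hda : (d:ℤ) ∣ a := by
          refine hcopdS.dvd_of_dvd_mul_right ?_
          calc (d:ℤ) ∣ (m:ℤ) := Int.natCast_dvd_natCast.mpr hddm
            _ ∣ a * ∑ i ∈ Finset.range (m' * P), (k ^ b) ^ i := h1
        obtain ⟨a₀, rfl⟩ := hda
        refine Subgroup.mul_mem _
          ((le_sup_left : Subgroup.zpowers (x ^ (d:ℤ)) ≤ M) ⟨a₀, by show (x ^ (d:ℤ)) ^ a₀ = x ^ ((d:ℤ) * a₀); rw [← zpow_mul]⟩)
          ((le_sup_right : Y ≤ M) ⟨(b:ℤ), zpow_natCast y b⟩)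
    have hMchar : M.Characteristic := char_of_pow_iff M _ hMiff
    have hMne : M ≠ ⊤ := by
      intro htop
      have hxM : x ∈ M := by rw [htop]; trivial
      rw [hMiff] at hxM
      have h1 : m ∣ m' * P := orderOf_dvd_of_pow_eq_one hxM |> fun h => ordx ▸ h
      rw [hmdm] at h1
      have h2 : d * m' ∣ P * m' := by
        rwa [mul_comm m' P] at h1
      have h3 : d ∣ P := by
        have := (mul_dvd_mul_iff_right (show m' ≠ 0 from hm'0)).mp h2
        exact this
      exact hdne (copdP.eq_one_of_dvd h3)
    have hMcyc := hcyc M hMchar hMne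
    have hyM : y ∈ M := (le_sup_right : Y ≤ M) (Subgroup.mem_zpowers y)
    have hxdM : x ^ (d:ℤ) ∈ M := (le_sup_left : Subgroup.zpowers (x ^ (d:ℤ)) ≤ M)
      (Subgroup.mem_zpowers _)
    have hcomm := commute_of_isCyclic hMcyc hyM hxdM
    have h3 := conj1 (d:ℤ)
    have h4 : y * x ^ (d:ℤ) * y⁻¹ = x ^ (d:ℤ) := by rw [hcomm]; group
    rw [h4] at h3
    have h5 : x ^ ((d:ℤ) * k - (d:ℤ)) = 1 := by
      rw [zpow_sub, ← h3]; group
    rw [hxiff] at h5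
    exact hmd (by rw [mul_sub, mul_one]; exact h5)
  · -- backward direction
    rintro ⟨hd, hkp⟩
    have hkp_dvd : (m:ℤ) ∣ k ^ p - 1 := dvd_sub_comm.mp hkp.dvd
    set z := x * y ^ p with hz
    have hzpow : ∀ c : ℕ, z ^ c = x ^ (c:ℤ) * y ^ (p * c) := by
      intro c
      have h1 := powF 1 p c
      rw [zpow_one] at h1
      rw [hz, h1, one_mul]
      congr 1
      have hS := geom_ones (m:ℤ) (k ^ p) hkp c
      obtain ⟨t, ht⟩ := hS.dvd
      have hSt : (∑ i ∈ Finset.range c, (k ^ p) ^ i) = (c:ℤ) + (m:ℤ) * (-t) := by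
        rw [mul_neg, ← ht]; ring
      rw [hSt, zpow_add, (hxiff ((m:ℤ) * (-t))).mpr ⟨-t, rfl⟩, mul_one]
    obtain ⟨c₁, hc₁m, hc₁p⟩ := Nat.chineseRemainder (hcop.pow_right α') 1 0
    obtain ⟨c₂, hc₂m, hc₂p⟩ := Nat.chineseRemainder (hcop.pow_right α') 0 1
    have hxz : x ∈ Subgroup.zpowers z := by
      refine Subgroup.mem_zpowers_iff.mpr ⟨(c₁ : ℤ), ?_⟩
      have h1 : y ^ (p * c₁) = 1 := by
        rw [hyiff]
        obtain ⟨t, ht⟩ := (Nat.modEq_zero_iff_dvd).mp hc₁p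
        rw [ht, hpα]
        exact ⟨t, by ring⟩
      have h2 : x ^ c₁ = x := by
        have h := (pow_eq_pow_iff_modEq (x := x) (n := c₁) (m := 1)).mpr
          (by rw [ordx]; exact hc₁m)
        rwa [pow_one] at h
      rw [zpow_natCast z c₁, hzpow c₁, h1, mul_one, zpow_natCast x c₁, h2]
    have hypz : y ^ p ∈ Subgroup.zpowers z := by
      refine Subgroup.mem_zpowers_iff.mpr ⟨(c₂ : ℤ), ?_⟩
      have h1 : x ^ c₂ = 1 := by
        rw [← orderOf_dvd_iff_pow_eq_one, ordx]
        exact (Nat.modEq_zero_iff_dvd).mp hc₂m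
      have h2 : y ^ (p * c₂) = y ^ p := by
        rw [pow_eq_pow_iff_modEq, ordy, hpα]
        have h3 := Nat.ModEq.mul_left' (c := p) hc₂p
        rw [mul_one] at h3
        rwa [mul_comm (p ^ α') p]
      rw [zpow_natCast z c₂, hzpow c₂, zpow_natCast x c₂, h1, one_mul, h2]
    refine ⟨?_, ⟨X, hXchar, ?_, ?_⟩, ?_⟩
    · -- not cyclic
      intro hGcyc
      obtain ⟨g, hg⟩ := hGcyc
      obtain ⟨i, hi⟩ := Subgroup.mem_zpowers_iff.mp (hg x)
      obtain ⟨j, hj⟩ := Subgroup.mem_zpowers_iff.mp (hg y)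
      have hxy : y * x * y⁻¹ = x := by rw [← hi, ← hj]; group
      have h6 : x ^ k = x := by rw [← hconj]; exact hxy
      have h5 : x ^ (k - 1) = 1 := by rw [zpow_sub, zpow_one, h6]; group
      rw [hxiff] at h5
      exact hk1 (Int.modEq_iff_dvd.mpr (dvd_sub_comm.mp h5))
    · -- X ≠ ⊥
      intro hbot
      have h1 : x = 1 := Subgroup.mem_bot.mp (hbot ▸ Subgroup.mem_zpowers x)
      have h2 := orderOf_eq_one_iff.mpr h1
      rw [ordx] at h2
      omega
    · -- X ≠ ⊤
      intro htop
      have h1 : y ∈ X := by rw [htop]; trivial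
      rw [hXiff] at h1
      have h2 : P ∣ m := (hyiff m).mp h1
      exact hpnm ((dvd_pow_self p (show α ≠ 0 by omega)).trans h2)
    · -- every proper characteristic subgroup is cyclic
      intro N hNchar hNtop
      haveI := hNchar
      have hNnormal : N.Normal := inferInstance
      refine isCyclic_of_le_zpowers (z := z) ?_
      intro g hg
      obtain ⟨a, b, rfl⟩ := decomp g
      by_cases hpb : p ∣ b
      · obtain ⟨b₀, rfl⟩ := hpb
        refine Subgroup.mul_mem _ (Subgroup.zpow_mem _ hxz a) ?_
        rw [pow_mul]
        exact Subgroup.pow_mem _ hypz b₀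
      · exfalso
        apply hNtop
        have hgx : (x ^ a * y ^ b) * x * (x ^ a * y ^ b)⁻¹ = x ^ (k ^ b) := by
          have e1 : (x ^ a * y ^ b) * x * (x ^ a * y ^ b)⁻¹
              = x ^ a * (y ^ b * x ^ (1:ℤ) * (y ^ b)⁻¹) * (x ^ a)⁻¹ := by
            rw [zpow_one]; group
          rw [e1, conjLem, one_mul]
          group
        have hw : x ^ (k ^ b - 1) ∈ N := by
          have h2 : (x ^ a * y ^ b) * (x * (x ^ a * y ^ b)⁻¹ * x⁻¹) ∈ N :=
            N.mul_mem hg (hNnormal.conj_mem _ (N.inv_mem hg) x)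
          have e2 : (x ^ a * y ^ b) * (x * (x ^ a * y ^ b)⁻¹ * x⁻¹)
              = ((x ^ a * y ^ b) * x * (x ^ a * y ^ b)⁻¹) * x⁻¹ := by group
          rw [e2, hgx] at h2
          have e3 : x ^ (k ^ b) * x⁻¹ = x ^ (k ^ b - 1) := by
            rw [zpow_sub, zpow_one]
          rwa [e3] at h2
        have hgcdb : Int.gcd (k ^ b - 1) (m:ℤ) = 1 := by
          by_contra hne
          obtain ⟨q, hq, hqd⟩ := Nat.exists_prime_and_dvd hne
          have hqm : q ∣ m := by
            have h1 : (q:ℤ) ∣ (m:ℤ) := (Int.natCast_dvd_natCast.mpr hqd).trans (Int.gcd_dvd_right _ _)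
            exact_mod_cast h1
          have hqb : (q:ℤ) ∣ k ^ b - 1 := (Int.natCast_dvd_natCast.mpr hqd).trans (Int.gcd_dvd_left _ _)
          have hzb : ((k : ZMod q)) ^ b = 1 := by
            have h1 : ((k ^ b - 1 : ℤ) : ZMod q) = 0 :=
              (ZMod.intCast_zmod_eq_zero_iff_dvd _ q).mpr hqb
            push_cast at h1
            rwa [sub_eq_zero] at h1
          have hzp : ((k : ZMod q)) ^ p = 1 := by
            have h1 : (q:ℤ) ∣ k ^ p - 1 := (Int.natCast_dvd_natCast.mpr hqm).trans hkp_dvd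
            have h2 : ((k ^ p - 1 : ℤ) : ZMod q) = 0 :=
              (ZMod.intCast_zmod_eq_zero_iff_dvd _ q).mpr h1
            push_cast at h2
            rwa [sub_eq_zero] at h2
          have hcopbp : Nat.gcd b p = 1 := ((hp.coprime_iff_not_dvd).mpr hpb).symm
          have hord : orderOf ((k : ZMod q)) ∣ 1 := by
            rw [← hcopbp]
            exact Nat.dvd_gcd (orderOf_dvd_of_pow_eq_one hzb) (orderOf_dvd_of_pow_eq_one hzp)
          rw [Nat.dvd_one, orderOf_eq_one_iff] at hord
          have hq1 : (q:ℤ) ∣ k - 1 := by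
            have h1 : ((k - 1 : ℤ) : ZMod q) = 0 := by push_cast [hord]; ring
            exact (ZMod.intCast_zmod_eq_zero_iff_dvd _ q).mp h1
          have hq2 : (q:ℕ) ∣ 1 := by
            have h1 := Int.dvd_gcd hq1 (Int.natCast_dvd_natCast.mpr hqm)
            rw [hd] at h1
            exact_mod_cast h1
          rw [Nat.dvd_one] at hq2
          exact hq.one_lt.ne' hq2
        have hxN : x ∈ N := by
          obtain ⟨u, v, huv⟩ := Int.isCoprime_iff_gcd_eq_one.mpr hgcdb
          have e5 : x = x ^ (u * (k ^ b - 1)) * x ^ (v * (m:ℤ)) := by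
            rw [← zpow_add, huv, zpow_one]
          have e6 : x ^ (v * (m:ℤ)) = 1 := (hxiff _).mpr ⟨v, by ring⟩
          have e7 : x ^ (u * (k ^ b - 1)) = (x ^ (k ^ b - 1)) ^ u := by
            rw [mul_comm, zpow_mul]
          rw [e5, e6, mul_one, e7]
          exact Subgroup.zpow_mem _ hw u
        have hyN : y ∈ N := by
          have hyb : y ^ b ∈ N := by
            have e8 : y ^ b = (x ^ a)⁻¹ * (x ^ a * y ^ b) := by group
            rw [e8]
            exact N.mul_mem (N.inv_mem (Subgroup.zpow_mem _ hxN a)) hg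
          have hbP : Int.gcd (b:ℤ) (P:ℤ) = 1 := by
            rw [Int.gcd_natCast_natCast]
            exact (((hp.coprime_iff_not_dvd).mpr hpb).symm).pow_right α
          obtain ⟨u, v, huv⟩ := Int.isCoprime_iff_gcd_eq_one.mpr hbP
          have e9 : y = y ^ (u * (b:ℤ)) * y ^ (v * (P:ℤ)) := by
            rw [← zpow_add, huv, zpow_one]
          have e10 : y ^ (v * (P:ℤ)) = 1 := by
            rw [hyiffZ]
            exact ⟨v, by ring⟩
          have e11 : y ^ (u * (b:ℤ)) = (y ^ (b:ℤ)) ^ u := by rw [mul_comm, zpow_mul]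
          rw [e9, e10, mul_one, e11]
          refine Subgroup.zpow_mem _ ?_ u
          rw [zpow_natCast]
          exact hyb
        rw [eq_top_iff, ← hgen, Subgroup.closure_le]
        intro g' hg'
        have hg'' : g' = x ∨ g' = y := hg'
        rcases hg'' with h | h <;> rw [SetLike.mem_coe, h]
        · exact hxN
        · exact hyN
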